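/- Value of the transformed problem: with A chosen larger than the total weight of all original edges, the maximum weight of a perfect matching in the augmented graph equals the maximum weight of a k-cardinality matching in the original complete bipartite graph plus (n+m-2k)·A. -/

import Mathlib

open Finset

/-- Edge weights of the augmented graph: original edges keep weight `w`,
new-to-old edges weigh `A`, new-to-new edges weigh `0`. -/
def augWeight {n m a b : ℕ} (w : Fin n → Fin m → ℝ) (A : ℝ) :
    (Fin n ⊕ Fin a) → (Fin m ⊕ Fin b) → ℝ
  | Sum.inl i, Sum.inl j => w i j
  | Sum.inl _, Sum.inr _ => A
  | Sum.inr _, Sum.inl _ => A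
  | Sum.inr _, Sum.inr _ => 0

/-- `M` is a matching (set of pairwise non-adjacent edges) of `K_{n,m}`. -/
def IsBipMatching {n m : ℕ} (M : Finset (Fin n × Fin m)) : Prop :=
  ∀ p ∈ M, ∀ q ∈ M, (p.1 = q.1 ∨ p.2 = q.2) → p = q

lemma extend_matching {n m : ℕ} (k : ℕ) (hkn : k ≤ n) (hkm : k ≤ m) :
    ∀ d (M : Finset (Fin n × Fin m)), IsBipMatching M → M.card + d = k →
    ∃ M', M ⊆ M' ∧ IsBipMatching M' ∧ M'.card = k := by
  intro d
  induction d with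
  | zero => exact fun M hM h => ⟨M, subset_rfl, hM, by omega⟩
  | succ d ih =>
    intro M hM h
    have hfst : (M.image Prod.fst).card < n := by
      have := Finset.card_image_le (s := M) (f := Prod.fst); omega
    have hsnd : (M.image Prod.snd).card < m := by
      have := Finset.card_image_le (s := M) (f := Prod.snd); omega
    obtain ⟨i, hi⟩ : ∃ i : Fin n, i ∉ M.image Prod.fst := by
      by_contra hc; push_neg at hc
      have : (univ : Finset (Fin n)) ⊆ M.image Prod.fst := fun x _ => hc x
      have := Finset.card_le_card this
      simp at this; omega
    obtain ⟨j, hj⟩ : ∃ j : Fin m, j ∉ M.image Prod.snd := by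
      by_contra hc; push_neg at hc
      have : (univ : Finset (Fin m)) ⊆ M.image Prod.snd := fun x _ => hc x
      have := Finset.card_le_card this
      simp at this; omega
    have hnotmem : (i, j) ∉ M := fun hmem => hi (Finset.mem_image_of_mem _ hmem)
    have hM' : IsBipMatching (insert (i, j) M) := by
      intro p hp q hq hpq
      rcases Finset.mem_insert.mp hp with rfl | hp <;>
        rcases Finset.mem_insert.mp hq with rfl | hq
      · rfl
      · exfalso; rcases hpq with h1 | h2
        · exact hi (Finset.mem_image.mpr ⟨q, hq, h1.symm⟩)
        · exact hj (Finset.mem_image.mpr ⟨q, hq, h2.symm⟩)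
      · exfalso; rcases hpq with h1 | h2
        · exact hi (Finset.mem_image.mpr ⟨p, hp, h1⟩)
        · exact hj (Finset.mem_image.mpr ⟨p, hp, h2⟩)
      · exact hM p hp q hq hpq
    obtain ⟨M', hsub, hM'', hcard⟩ := ih (insert (i, j) M) hM'
      (by rw [Finset.card_insert_of_notMem hnotmem]; omega)
    exact ⟨M', (Finset.subset_insert _ _).trans hsub, hM'', hcard⟩

lemma exists_equiv_of_matching {n m k : ℕ} (hkn : k ≤ n) (hkm : k ≤ m)
    (w : Fin n → Fin m → ℝ) (A : ℝ)
    (M : Finset (Fin n × Fin m)) (hM : IsBipMatching M) (hcard : M.card = k) :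
    ∃ e : (Fin n ⊕ Fin (m - k)) ≃ (Fin m ⊕ Fin (n - k)),
      ∑ x : Fin n ⊕ Fin (m - k), augWeight w A x (e x)
        = (∑ p ∈ M, w p.1 p.2) + (((n - k : ℕ) : ℝ) + ((m - k : ℕ) : ℝ)) * A := by
  classical
  set L : Finset (Fin n) := M.image Prod.fst with hLdef
  set R : Finset (Fin m) := M.image Prod.snd with hRdef
  have hL : L.card = k := by
    rw [hLdef, Finset.card_image_of_injOn, hcard]
    intro p hp q hq hpq; exact hM p hp q hq (Or.inl hpq)
  have hR : R.card = k := by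
    rw [hRdef, Finset.card_image_of_injOn, hcard]
    intro p hp q hq hpq; exact hM p hp q hq (Or.inr hpq)
  -- equivalences
  have φbij : Function.Bijective (fun p : {p // p ∈ M} => (⟨p.1.1, Finset.mem_image_of_mem _ p.2⟩ : {i // i ∈ L})) := by
    constructor
    · intro p q hpq
      exact Subtype.ext (hM p.1 p.2 q.1 q.2 (Or.inl (congrArg Subtype.val hpq)))
    · rintro ⟨x, hx⟩
      obtain ⟨p, hp, rfl⟩ := Finset.mem_image.mp hx
      exact ⟨⟨p, hp⟩, rfl⟩
  have ψbij : Function.Bijective (fun p : {p // p ∈ M} => (⟨p.1.2, Finset.mem_image_of_mem _ p.2⟩ : {j // j ∈ R})) := by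
    constructor
    · intro p q hpq
      exact Subtype.ext (hM p.1 p.2 q.1 q.2 (Or.inr (congrArg Subtype.val hpq)))
    · rintro ⟨x, hx⟩
      obtain ⟨p, hp, rfl⟩ := Finset.mem_image.mp hx
      exact ⟨⟨p, hp⟩, rfl⟩
  set φ := Equiv.ofBijective _ φbij with hφdef
  set ψ := Equiv.ofBijective _ ψbij with hψdef
  set μ : {i // i ∈ L} ≃ {j // j ∈ R} := φ.symm.trans ψ with hμdef
  have hcL : Fintype.card {i : Fin n // i ∉ L} = n - k := by
    rw [Fintype.card_subtype_compl]; simp [hL]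
  have hcR : Fintype.card {j : Fin m // j ∉ R} = m - k := by
    rw [Fintype.card_subtype_compl]; simp [hR]
  set eL : {i : Fin n // i ∉ L} ≃ Fin (n - k) := Fintype.equivFinOfCardEq hcL with heL
  set eR : {j : Fin m // j ∉ R} ≃ Fin (m - k) := Fintype.equivFinOfCardEq hcR with heR
  set F : (Fin n ⊕ Fin (m - k)) → (Fin m ⊕ Fin (n - k)) := fun x =>
    match x with
    | Sum.inl i => if h : i ∈ L then Sum.inl (μ ⟨i, h⟩ : {j // j ∈ R}).1 else Sum.inr (eL ⟨i, h⟩)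
    | Sum.inr p => Sum.inl (eR.symm p).1
    with hFdef
  have hinj : Function.Injective F := by
    intro x y hxy
    rcases x with i | p <;> rcases y with i' | p'
    · simp only [hFdef] at hxy
      by_cases h : i ∈ L <;> by_cases h' : i' ∈ L
      · rw [dif_pos h, dif_pos h'] at hxy
        have h3 : (⟨i, h⟩ : {i // i ∈ L}) = ⟨i', h'⟩ := μ.injective (Subtype.ext (Sum.inl_injective hxy))
        exact congrArg Sum.inl (congrArg Subtype.val h3)
      · rw [dif_pos h, dif_neg h'] at hxy; exact absurd hxy (by simp)
      · rw [dif_neg h, dif_pos h'] at hxy; exact absurd hxy (by simp)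
      · rw [dif_neg h, dif_neg h'] at hxy
        have := eL.injective (Sum.inr_injective hxy)
        exact congrArg Sum.inl (congrArg Subtype.val this)
    · exfalso
      simp only [hFdef] at hxy
      by_cases h : i ∈ L
      · rw [dif_pos h] at hxy
        have hv : (μ ⟨i, h⟩).1 = (eR.symm p').1 := Sum.inl_injective hxy
        exact (eR.symm p').2 (hv ▸ (μ ⟨i, h⟩).2)
      · rw [dif_neg h] at hxy; exact Sum.inr_ne_inl hxy
    · exfalso
      simp only [hFdef] at hxy
      by_cases h : i' ∈ L
      · rw [dif_pos h] at hxy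
        have hv : (eR.symm p).1 = (μ ⟨i', h⟩).1 := Sum.inl_injective hxy
        exact (eR.symm p).2 (hv ▸ (μ ⟨i', h⟩).2)
      · rw [dif_neg h] at hxy; exact Sum.inl_ne_inr hxy
    · simp only [hFdef] at hxy
      have := eR.symm.injective (Subtype.ext (Sum.inl_injective hxy))
      exact congrArg Sum.inr this
  have hbij : Function.Bijective F := by
    rw [Fintype.bijective_iff_injective_and_card]
    exact ⟨hinj, by simp; omega⟩
  refine ⟨Equiv.ofBijective F hbij, ?_⟩
  have he : ∀ x, (Equiv.ofBijective F hbij) x = F x := fun _ => rfl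
  rw [Fintype.sum_sum_type]
  have h2 : ∑ p : Fin (m - k), augWeight w A (Sum.inr p) ((Equiv.ofBijective F hbij) (Sum.inr p))
      = ((m - k : ℕ) : ℝ) * A := by
    have : ∀ p : Fin (m - k), augWeight w A (Sum.inr p) ((Equiv.ofBijective F hbij) (Sum.inr p)) = A := by
      intro p; rw [he]; rfl
    rw [Finset.sum_congr rfl (fun p _ => this p)]
    simp [mul_comm]
  have h1 : ∑ i : Fin n, augWeight w A (Sum.inl i : Fin n ⊕ Fin (m - k)) ((Equiv.ofBijective F hbij) (Sum.inl i))
      = (∑ p ∈ M, w p.1 p.2) + ((n - k : ℕ) : ℝ) * A := by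
    rw [← Finset.sum_sdiff (Finset.subset_univ L)]
    have hL1 : ∑ i ∈ L, augWeight w A (Sum.inl i : Fin n ⊕ Fin (m - k)) ((Equiv.ofBijective F hbij) (Sum.inl i))
        = ∑ p ∈ M, w p.1 p.2 := by
      rw [← Finset.sum_attach L (fun i => augWeight w A (Sum.inl i : Fin n ⊕ Fin (m - k)) ((Equiv.ofBijective F hbij) (Sum.inl i)))]
      have step : ∀ x : {i // i ∈ L},
          augWeight w A (Sum.inl x.1 : Fin n ⊕ Fin (m - k)) ((Equiv.ofBijective F hbij) (Sum.inl x.1)) = w x.1 (μ x).1 := by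
        intro x
        rw [he]
        show augWeight w A (Sum.inl x.1) (F (Sum.inl x.1)) = _
        simp only [hFdef, dif_pos x.2]
        rfl
      rw [Finset.sum_congr rfl (fun x _ => step x)]
      rw [← Finset.univ_eq_attach]
      rw [← Equiv.sum_comp φ (fun x => w x.1 (μ x).1)]
      have : ∀ q : {p // p ∈ M}, w (φ q).1 (μ (φ q)).1 = w q.1.1 q.1.2 := by
        intro q
        have h1 : (φ q).1 = q.1.1 := rfl
        have h2 : μ (φ q) = ψ q := by simp [hμdef]
        rw [h1, h2]; rfl
      rw [Finset.sum_congr rfl (fun q _ => this q)]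
      rw [Finset.univ_eq_attach, Finset.sum_attach M (fun p => w p.1 p.2)]
    have hL2 : ∑ i ∈ univ \ L, augWeight w A (Sum.inl i : Fin n ⊕ Fin (m - k)) ((Equiv.ofBijective F hbij) (Sum.inl i))
        = ((n - k : ℕ) : ℝ) * A := by
      have step : ∀ i ∈ univ \ L,
          augWeight w A (Sum.inl i : Fin n ⊕ Fin (m - k)) ((Equiv.ofBijective F hbij) (Sum.inl i)) = A := by
        intro i hi
        have h : i ∉ L := (Finset.mem_sdiff.mp hi).2
        rw [he]
        show augWeight w A (Sum.inl i) (F (Sum.inl i)) = _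
        simp only [hFdef, dif_neg h]
        rfl
      rw [Finset.sum_congr rfl step, Finset.sum_const]
      rw [Finset.card_sdiff_of_subset (Finset.subset_univ L)]
      simp [hL, mul_comm]
    rw [hL1, hL2]; ring
  rw [h1, h2]; ring

lemma aug_upper_bound {n m k : ℕ} (hkn : k ≤ n) (hkm : k ≤ m)
    (w : Fin n → Fin m → ℝ) (hw : ∀ i j, 0 ≤ w i j) (A : ℝ)
    (hA : (∑ i : Fin n, ∑ j : Fin m, w i j) < A)
    (a : ℝ) (ha0 : 0 ≤ a)
    (hub : ∀ M : Finset (Fin n × Fin m), IsBipMatching M → M.card ≤ k →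
      ∑ p ∈ M, w p.1 p.2 ≤ a)
    (e : (Fin n ⊕ Fin (m - k)) ≃ (Fin m ⊕ Fin (n - k))) :
    ∑ x : Fin n ⊕ Fin (m - k), augWeight w A x (e x)
      ≤ a + ((n + m - 2 * k : ℕ) : ℝ) * A := by
  classical
  set T := (univ : Finset (Fin n)).filter (fun i => (e (Sum.inl i)).isLeft = true) with hT
  set S := (univ : Finset (Fin (m - k))).filter (fun p => (e (Sum.inr p)).isLeft = true) with hS
  set M := (univ : Finset (Fin n × Fin m)).filter
    (fun p => e (Sum.inl p.1) = Sum.inl p.2) with hMdef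
  have hMmatch : IsBipMatching M := by
    intro p hp q hq hpq
    have hp' := (Finset.mem_filter.mp hp).2
    have hq' := (Finset.mem_filter.mp hq).2
    rcases hpq with h1 | h2
    · have : (Sum.inl p.2 : Fin m ⊕ Fin (n - k)) = Sum.inl q.2 := by rw [← hp', ← hq', h1]
      exact Prod.ext h1 (Sum.inl_injective this)
    · have : (Sum.inl p.1 : Fin n ⊕ Fin (m - k)) = Sum.inl q.1 := e.injective (by rw [hp', hq', h2])
      exact Prod.ext (Sum.inl_injective this) h2
  have hMcard : M.card = T.card := by
    apply Finset.card_bij (fun p _ => p.1)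
    · intro p hp
      have := (Finset.mem_filter.mp hp).2
      simp [hT, this]
    · intro p hp q hq h
      exact hMmatch p hp q hq (Or.inl h)
    · intro i hi
      have := (Finset.mem_filter.mp hi).2
      obtain ⟨j, hj⟩ := Sum.isLeft_iff.mp this
      exact ⟨(i, j), Finset.mem_filter.mpr ⟨Finset.mem_univ _, hj⟩, rfl⟩
  -- counting: T.card + S.card = m
  have hcount : T.card + S.card = m := by
    have c1 : Fintype.card {x : Fin n ⊕ Fin (m - k) // (e x).isLeft = true}
        = Fintype.card {y : Fin m ⊕ Fin (n - k) // y.isLeft = true} :=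
      Fintype.card_congr (e.subtypeEquiv (fun x => Iff.rfl))
    have c2 : Fintype.card {y : Fin m ⊕ Fin (n - k) // y.isLeft = true} = m := by
      have eqv : Fin m ≃ {y : Fin m ⊕ Fin (n - k) // y.isLeft = true} := by
        refine Equiv.ofBijective (fun j => ⟨Sum.inl j, rfl⟩) ⟨?_, ?_⟩
        · intro j j' h
          exact Sum.inl_injective (congrArg Subtype.val h)
        · rintro ⟨y, hy⟩
          obtain ⟨j, rfl⟩ := Sum.isLeft_iff.mp hy
          exact ⟨j, rfl⟩
      rw [← Fintype.card_congr eqv, Fintype.card_fin]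
    have c3 : Fintype.card {x : Fin n ⊕ Fin (m - k) // (e x).isLeft = true}
        = Fintype.card {i : Fin n // (e (Sum.inl i)).isLeft = true}
          + Fintype.card {p : Fin (m - k) // (e (Sum.inr p)).isLeft = true} := by
      rw [Fintype.card_congr (Equiv.subtypeSum
        (p := fun x : Fin n ⊕ Fin (m - k) => (e x).isLeft = true)), Fintype.card_sum]
    have c4 : Fintype.card {i : Fin n // (e (Sum.inl i)).isLeft = true} = T.card := by
      rw [Fintype.card_subtype]
    have c5 : Fintype.card {p : Fin (m - k) // (e (Sum.inr p)).isLeft = true} = S.card := by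
      rw [Fintype.card_subtype]
    omega
  have hTn : T.card ≤ n := by
    have := Finset.card_le_card (Finset.subset_univ T); simpa using this
  have hSu : S.card ≤ m - k := by
    have := Finset.card_le_card (Finset.subset_univ S); simpa using this
  -- the total sum
  have hsum : ∑ x : Fin n ⊕ Fin (m - k), augWeight w A x (e x)
      = (∑ p ∈ M, w p.1 p.2) + ((n - T.card : ℕ) : ℝ) * A + (S.card : ℝ) * A := by
    rw [Fintype.sum_sum_type]
    have hI : ∑ i : Fin n, augWeight w A (Sum.inl i : Fin n ⊕ Fin (m - k)) (e (Sum.inl i))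
        = (∑ p ∈ M, w p.1 p.2) + ((n - T.card : ℕ) : ℝ) * A := by
      rw [← Finset.sum_sdiff (Finset.subset_univ T)]
      have e1 : ∑ i ∈ T, augWeight w A (Sum.inl i : Fin n ⊕ Fin (m - k)) (e (Sum.inl i))
          = ∑ p ∈ M, w p.1 p.2 := by
        symm
        apply Finset.sum_bij (fun p (_ : p ∈ M) => p.1)
        · intro p hp
          have := (Finset.mem_filter.mp hp).2
          simp [hT, this]
        · intro p hp q hq h
          exact hMmatch p hp q hq (Or.inl h)
        · intro i hi
          have := (Finset.mem_filter.mp hi).2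
          obtain ⟨j, hj⟩ := Sum.isLeft_iff.mp this
          exact ⟨(i, j), Finset.mem_filter.mpr ⟨Finset.mem_univ _, hj⟩, rfl⟩
        · intro p hp
          have h := (Finset.mem_filter.mp hp).2
          rw [h]; rfl
      have e2 : ∑ i ∈ univ \ T, augWeight w A (Sum.inl i : Fin n ⊕ Fin (m - k)) (e (Sum.inl i))
          = ((n - T.card : ℕ) : ℝ) * A := by
        have step : ∀ i ∈ univ \ T,
            augWeight w A (Sum.inl i : Fin n ⊕ Fin (m - k)) (e (Sum.inl i)) = A := by
          intro i hi
          have h : ¬ ((e (Sum.inl i)).isLeft = true) := by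
            have := (Finset.mem_sdiff.mp hi).2
            simpa [hT] using this
          obtain ⟨y, hy⟩ := Sum.isRight_iff.mp (Sum.not_isLeft.mp h)
          rw [hy]; rfl
        rw [Finset.sum_congr rfl step, Finset.sum_const]
        rw [Finset.card_sdiff_of_subset (Finset.subset_univ T)]
        simp [mul_comm]
      rw [e1, e2]; ring
    have hP : ∑ p : Fin (m - k), augWeight w A (Sum.inr p : Fin n ⊕ Fin (m - k)) (e (Sum.inr p))
        = (S.card : ℝ) * A := by
      rw [← Finset.sum_sdiff (Finset.subset_univ S)]
      have e1 : ∑ p ∈ S, augWeight w A (Sum.inr p : Fin n ⊕ Fin (m - k)) (e (Sum.inr p))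
          = (S.card : ℝ) * A := by
        have step : ∀ p ∈ S,
            augWeight w A (Sum.inr p : Fin n ⊕ Fin (m - k)) (e (Sum.inr p)) = A := by
          intro p hp
          have := (Finset.mem_filter.mp hp).2
          obtain ⟨j, hj⟩ := Sum.isLeft_iff.mp this
          rw [hj]; rfl
        rw [Finset.sum_congr rfl step, Finset.sum_const]
        simp [mul_comm]
      have e2 : ∑ p ∈ univ \ S, augWeight w A (Sum.inr p : Fin n ⊕ Fin (m - k)) (e (Sum.inr p))
          = 0 := by
        apply Finset.sum_eq_zero
        intro p hp
        have h : ¬ ((e (Sum.inr p)).isLeft = true) := by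
          have := (Finset.mem_sdiff.mp hp).2
          simpa [hS] using this
        obtain ⟨y, hy⟩ := Sum.isRight_iff.mp (Sum.not_isLeft.mp h)
        rw [hy]; rfl
      rw [e1, e2]; ring
    rw [hI, hP]
  rw [hsum]
  have hAnn : 0 ≤ A := by
    have : (0 : ℝ) ≤ ∑ i : Fin n, ∑ j : Fin m, w i j :=
      Finset.sum_nonneg fun i _ => Finset.sum_nonneg fun j _ => hw i j
    linarith
  by_cases ht : T.card = k
  · have h1 : ∑ p ∈ M, w p.1 p.2 ≤ a := hub M hMmatch (by omega)
    have h2 : (n - T.card) + S.card = n + m - 2 * k := by omega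
    have h3 : ((n - T.card : ℕ) : ℝ) * A + (S.card : ℝ) * A = ((n + m - 2 * k : ℕ) : ℝ) * A := by
      rw [← add_mul, ← Nat.cast_add, h2]
    linarith
  · -- T.card > k
    have htk : k < T.card := by omega
    have hMw : ∑ p ∈ M, w p.1 p.2 ≤ ∑ i : Fin n, ∑ j : Fin m, w i j := by
      rw [← Fintype.sum_prod_type']
      exact Finset.sum_le_sum_of_subset_of_nonneg (Finset.subset_univ M)
        (fun p _ _ => hw p.1 p.2)
    have h2 : (n - T.card) + S.card + 2 ≤ n + m - 2 * k := by omega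
    have h3 : ((n - T.card : ℕ) : ℝ) + (S.card : ℝ) + 2 ≤ ((n + m - 2 * k : ℕ) : ℝ) := by
      have := Nat.cast_le (α := ℝ).mpr h2
      push_cast at this ⊢
      linarith
    nlinarith [mul_le_mul_of_nonneg_right h3 hAnn]

/-- With `A` larger than the total weight of all original edges,
the maximum weight of a perfect matching of the augmented graph equals the
maximum weight of a `k`-cardinality matching of `K_{n,m}` plus
`(n + m - 2k) * A`. -/
theorem transformed_problem_value
    (n m k : ℕ) (hk : k ≤ min n m)
    (w : Fin n → Fin m → ℝ) (hw : ∀ i j, 0 ≤ w i j) (A : ℝ)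
    (hA : (∑ i : Fin n, ∑ j : Fin m, w i j) < A)
    (a : ℝ)
    (ha : IsGreatest {v : ℝ | ∃ M : Finset (Fin n × Fin m),
        IsBipMatching M ∧ M.card ≤ k ∧ v = ∑ p ∈ M, w p.1 p.2} a) :
    IsGreatest {v : ℝ | ∃ e : (Fin n ⊕ Fin (m - k)) ≃ (Fin m ⊕ Fin (n - k)),
        v = ∑ x : Fin n ⊕ Fin (m - k), augWeight w A x (e x)}
      (a + ((n + m - 2 * k : ℕ) : ℝ) * A) := by
  have hkn : k ≤ n := le_trans hk (min_le_left _ _)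
  have hkm : k ≤ m := le_trans hk (min_le_right _ _)
  have ha0 : 0 ≤ a := by
    have : (0 : ℝ) ∈ {v : ℝ | ∃ M : Finset (Fin n × Fin m),
        IsBipMatching M ∧ M.card ≤ k ∧ v = ∑ p ∈ M, w p.1 p.2} :=
      ⟨∅, fun p hp => absurd hp (Finset.notMem_empty p), by simp, by simp⟩
    exact ha.2 this
  constructor
  · -- membership
    obtain ⟨M0, hM0, hM0card, hM0sum⟩ := ha.1
    obtain ⟨M, hsub, hMmatch, hMcard⟩ :=
      extend_matching k hkn hkm (k - M0.card) M0 hM0 (by omega)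
    have hMa : ∑ p ∈ M, w p.1 p.2 = a := by
      apply le_antisymm
      · exact ha.2 ⟨M, hMmatch, le_of_eq hMcard, rfl⟩
      · rw [hM0sum]
        exact Finset.sum_le_sum_of_subset_of_nonneg hsub (fun p _ _ => hw p.1 p.2)
    obtain ⟨e, hes⟩ := exists_equiv_of_matching hkn hkm w A M hMmatch hMcard
    refine ⟨e, ?_⟩
    rw [hes, hMa]
    have hnat : (n - k) + (m - k) = n + m - 2 * k := by omega
    rw [← Nat.cast_add, hnat]
  · rintro v ⟨e, rfl⟩
    exact aug_upper_bound hkn hkm w hw A hA a ha0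
      (fun M hm hc => ha.2 ⟨M, hm, hc, rfl⟩) e
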